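/- In the threshold-based feedback scheme where user i feeds back iff U_i^{1/w_i} > η_th with η_th = p^{1/Σ_j w_j}, the probability that no user feeds back equals p, and conditioned on at least one feedback, the probability that user i has the maximum of U_j^{1/w_j} equals α_i = w_i/Σ_j w_j. -/

import Mathlib

open MeasureTheory ProbabilityTheory intervalIntegral

namespace ThresholdFeedbackAux

/-- The uniform distribution on `[0,1]`. -/
noncomputable def lam : Measure ℝ := volume.restrict (Set.Icc (0:ℝ) 1)

lemma lam_def : lam = volume.restrict (Set.Icc (0:ℝ) 1) := rfl

instance : IsProbabilityMeasure lam :=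
  ⟨by rw [lam_def, Measure.restrict_apply_univ, Real.volume_Icc]; norm_num⟩

lemma meas_set (v s : ℝ) : MeasurableSet {u : ℝ | u ^ (1/v) < s} := by
  have h : Measurable fun u : ℝ => u ^ (1/v) := by fun_prop
  exact measurableSet_lt h measurable_const

lemma L1 {v s : ℝ} (hv : 0 < v) (hs0 : 0 < s) (hs1 : s ≤ 1) :
    lam {u : ℝ | u ^ (1/v) < s} = ENNReal.ofReal (s ^ v) := by
  rw [lam, Measure.restrict_apply (meas_set v s)]
  have hkey : {u : ℝ | u ^ (1/v) < s} ∩ Set.Icc 0 1 = Set.Ico 0 (s ^ v) := by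
    ext u
    simp only [Set.mem_inter_iff, Set.mem_setOf_eq, Set.mem_Icc, Set.mem_Ico]
    constructor
    · rintro ⟨h1, h2, _⟩
      refine ⟨h2, ?_⟩
      rwa [one_div, Real.rpow_inv_lt_iff_of_pos h2 hs0.le hv] at h1
    · rintro ⟨h1, h2⟩
      have hsv1 : s ^ v ≤ 1 := Real.rpow_le_one hs0.le hs1 hv.le
      exact ⟨by rwa [one_div, Real.rpow_inv_lt_iff_of_pos h1 hs0.le hv], h1, h2.le.trans hsv1⟩
  rw [hkey, Real.volume_Ico, sub_zero]

lemma L2 {m : ℕ} (v : Fin m → ℝ) (hv : ∀ k, 0 < v k) {s : ℝ} (hs0 : 0 < s) (hs1 : s ≤ 1) :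
    Measure.pi (fun _ : Fin m => lam) {y : Fin m → ℝ | ∀ k, y k ^ (1/(v k)) < s}
      = ENNReal.ofReal (s ^ ∑ k, v k) := by
  have hparse : {y : Fin m → ℝ | ∀ k, y k ^ (1/(v k)) < s}
      = Set.pi Set.univ (fun k => {u : ℝ | u ^ (1/(v k)) < s}) := by
    ext y; simp [Set.mem_pi]
  rw [hparse, Measure.pi_pi, Real.rpow_sum_of_pos hs0,
    ENNReal.ofReal_prod_of_nonneg (fun k _ => (Real.rpow_pos_of_pos hs0 _).le)]
  exact Finset.prod_congr rfl fun k _ => L1 (hv k) hs0 hs1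

end ThresholdFeedbackAux

open ThresholdFeedbackAux in
/-- Threshold-based feedback with a single threshold `η_th = p^{1/∑ w_j}`:
the probability that no user feeds back is `p`, and conditioned on at least one
feedback, user `i` has the largest `U_j^{1/w_j}` with probability `α_i = w_i/∑ w_j`. -/
theorem threshold_feedback_access_ratio {Ω : Type*} [MeasurableSpace Ω]
    (μ : Measure Ω) [IsProbabilityMeasure μ] (n : ℕ)
    (U : Fin n → Ω → ℝ) (hUmeas : ∀ i, Measurable (U i))
    (hindep : iIndepFun (m := fun _ => Real.measurableSpace) U μ)
    (hunif : ∀ i, ∀ u ∈ Set.Icc (0 : ℝ) 1, μ {ω | U i ω ≤ u} = ENNReal.ofReal u)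
    (w : Fin n → ℝ) (hw : ∀ i, 0 < w i)
    (p : ℝ) (hp : p ∈ Set.Ioo (0 : ℝ) 1)
    (η : ℝ) (hη : η = p ^ (1 / ∑ j, w j)) (i : Fin n) :
    μ {ω | ∀ j, (U j ω) ^ (1 / w j) < η} = ENNReal.ofReal p ∧
    μ ({ω | η < (U i ω) ^ (1 / w i)} ∩
        {ω | ∀ j, j ≠ i → (U j ω) ^ (1 / w j) < (U i ω) ^ (1 / w i)}) /
      μ {ω | ∀ j, (U j ω) ^ (1 / w j) < η}ᶜ
      = ENNReal.ofReal (w i / ∑ j, w j) := by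
  obtain ⟨m, rfl⟩ : ∃ m, n = m + 1 := ⟨n - 1, by have := i.pos; omega⟩
  obtain ⟨hp0, hp1⟩ := hp
  set W := ∑ j, w j with hWdef
  have hW : 0 < W := Finset.sum_pos (fun j _ => hw j) ⟨i, Finset.mem_univ i⟩
  have hwiW : w i ≤ W := Finset.single_le_sum (fun j _ => (hw j).le) (Finset.mem_univ i)
  have hη0 : 0 < η := by rw [hη]; exact Real.rpow_pos_of_pos hp0 _
  have hη1 : η < 1 := by
    rw [hη]; exact Real.rpow_lt_one hp0.le hp1 (by positivity)
  have hηW : η ^ W = p := by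
    rw [hη, ← Real.rpow_mul hp0.le, one_div, inv_mul_cancel₀ hW.ne', Real.rpow_one]
  -- the marginal distributions are uniform on [0,1]
  have hmap : ∀ j, μ.map (U j) = lam := by
    intro j
    haveI : IsProbabilityMeasure (μ.map (U j)) :=
      Measure.isProbabilityMeasure_map (hUmeas j).aemeasurable
    refine Measure.ext_of_Iic _ _ fun x => ?_
    rw [Measure.map_apply (hUmeas j) measurableSet_Iic, lam_def,
      Measure.restrict_apply measurableSet_Iic]
    rcases lt_or_ge x 0 with hx | hx
    · have h1 : μ (U j ⁻¹' Set.Iic x) = 0 := by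
        refine le_antisymm ?_ (zero_le)
        calc μ (U j ⁻¹' Set.Iic x) ≤ μ {ω | U j ω ≤ 0} :=
              measure_mono fun ω (hω : U j ω ≤ x) => (show U j ω ≤ 0 from hω.trans hx.le)
          _ = 0 := by rw [hunif j 0 (by norm_num)]; simp
      have h2 : Set.Iic x ∩ Set.Icc (0:ℝ) 1 = ∅ := by
        ext u
        simp only [Set.mem_inter_iff, Set.mem_Iic, Set.mem_Icc, Set.mem_empty_iff_false,
          iff_false, not_and]
        intro h1' h2'; linarith
      rw [h1, h2]; simp
    rcases le_or_gt x 1 with hx1 | hx1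
    · have h2 : Set.Iic x ∩ Set.Icc (0:ℝ) 1 = Set.Icc 0 x := by
        ext u
        simp only [Set.mem_inter_iff, Set.mem_Iic, Set.mem_Icc]
        exact ⟨fun ⟨h1', h2', _⟩ => ⟨h2', h1'⟩, fun ⟨h1', h2'⟩ => ⟨h2', h1', h2'.trans hx1⟩⟩
      rw [show U j ⁻¹' Set.Iic x = {ω | U j ω ≤ x} from rfl, hunif j x ⟨hx, hx1⟩, h2,
        Real.volume_Icc, sub_zero]
    · have h1 : μ (U j ⁻¹' Set.Iic x) = 1 := by
        refine le_antisymm prob_le_one ?_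
        have hle : μ {ω | U j ω ≤ 1} ≤ μ (U j ⁻¹' Set.Iic x) :=
          measure_mono fun ω (hω : U j ω ≤ 1) => (show U j ω ≤ x from hω.trans hx1.le)
        rw [hunif j 1 (by norm_num)] at hle
        simpa using hle
      have h2 : Set.Iic x ∩ Set.Icc (0:ℝ) 1 = Set.Icc 0 1 := by
        rw [Set.inter_eq_right]
        exact fun u hu => hu.2.trans hx1.le
      rw [h1, h2, Real.volume_Icc]
      norm_num
  -- the joint distribution is the product of uniforms
  set F : Ω → (Fin (m+1) → ℝ) := fun ω j => U j ω with hF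
  have hFmeas : Measurable F := measurable_pi_lambda _ fun j => hUmeas j
  have hjoint : μ.map F = Measure.pi (fun _ : Fin (m+1) => lam) := by
    refine (Measure.pi_eq fun s hs => ?_).symm
    rw [Measure.map_apply hFmeas (MeasurableSet.univ_pi hs)]
    have hpre : F ⁻¹' Set.pi Set.univ s = ⋂ j ∈ Finset.univ, U j ⁻¹' s j := by
      ext ω; simp [hF, Set.mem_pi]
    rw [hpre, hindep.measure_inter_preimage_eq_mul Finset.univ (fun j _ => hs j)]
    exact Finset.prod_congr rfl fun j _ => by
      rw [← Measure.map_apply (hUmeas j) (hs j), hmap j]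
  -- part 1
  have hAmeas : MeasurableSet {x : Fin (m+1) → ℝ | ∀ j, x j ^ (1 / w j) < η} := by
    have hparse : {x : Fin (m+1) → ℝ | ∀ j, x j ^ (1 / w j) < η}
        = Set.pi Set.univ (fun j => {u : ℝ | u ^ (1 / w j) < η}) := by
      ext x; simp [Set.mem_pi]
    rw [hparse]
    exact MeasurableSet.univ_pi fun j => meas_set _ _
  have hpre1 : {ω | ∀ j, U j ω ^ (1 / w j) < η}
      = F ⁻¹' {x : Fin (m+1) → ℝ | ∀ j, x j ^ (1 / w j) < η} := rfl
  have part1 : μ {ω | ∀ j, U j ω ^ (1 / w j) < η} = ENNReal.ofReal p := by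
    rw [hpre1, ← Measure.map_apply hFmeas hAmeas, hjoint, L2 w hw hη0 hη1.le,
      ← hWdef, hηW]
  refine ⟨part1, ?_⟩
  -- denominator
  have hcompl : μ {ω | ∀ j, U j ω ^ (1 / w j) < η}ᶜ = ENNReal.ofReal (1 - p) := by
    rw [measure_compl (by rw [hpre1]; exact hFmeas hAmeas) (measure_ne_top μ _),
      part1, measure_univ, ← ENNReal.ofReal_one, ← ENNReal.ofReal_sub _ hp0.le]
  -- numerator
  set c := (W - w i) / w i with hc
  have hc0 : 0 ≤ c := div_nonneg (by linarith) (hw i).le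
  set B : Set (Fin (m+1) → ℝ) :=
    {x | η < x i ^ (1 / w i)} ∩ {x | ∀ j, j ≠ i → x j ^ (1 / w j) < x i ^ (1 / w i)} with hBdef
  have hrp : ∀ (j : Fin (m+1)), Measurable fun x : Fin (m+1) → ℝ => x j ^ (1 / w j) :=
    fun j => (show Measurable fun u : ℝ => u ^ (1 / w j) by fun_prop).comp
      (measurable_pi_apply j)
  have hBmeas : MeasurableSet B := by
    refine MeasurableSet.inter (measurableSet_lt measurable_const (hrp i)) ?_
    have hparse : {x : Fin (m+1) → ℝ | ∀ j, j ≠ i → x j ^ (1 / w j) < x i ^ (1 / w i)}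
        = ⋂ j, ⋂ (_ : j ≠ i), {x : Fin (m+1) → ℝ | x j ^ (1 / w j) < x i ^ (1 / w i)} := by
      ext x; simp
    rw [hparse]
    exact MeasurableSet.iInter fun j => MeasurableSet.iInter fun _ =>
      measurableSet_lt (hrp j) (hrp i)
  have hpre2 : ({ω | η < U i ω ^ (1 / w i)} ∩
      {ω | ∀ j, j ≠ i → U j ω ^ (1 / w j) < U i ω ^ (1 / w i)}) = F ⁻¹' B := rfl
  have ha0 : 0 < η ^ w i := Real.rpow_pos_of_pos hη0 _
  have ha1 : η ^ w i < 1 := Real.rpow_lt_one hη0.le hη1 (hw i)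
  have hnum : Measure.pi (fun _ : Fin (m+1) => lam) B
      = ENNReal.ofReal ((w i / W) * (1 - p)) := by
    have hmp := (measurePreserving_piFinSuccAbove (fun _ : Fin (m+1) => lam) i).symm _
    rw [← hmp.measure_preimage hBmeas.nullMeasurableSet,
      Measure.prod_apply ((MeasurableEquiv.piFinSuccAbove (fun _ : Fin (m+1) => ℝ) i).symm.measurable hBmeas)]
    have hslice : ∀ t ∈ Set.Icc (0:ℝ) 1,
        (Measure.pi fun _ : Fin m => lam)
          (Prod.mk t ⁻¹' ((MeasurableEquiv.piFinSuccAbove (fun _ : Fin (m+1) => ℝ) i).symm ⁻¹' B))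
        = Set.indicator (Set.Ioi (η ^ w i)) (fun t => ENNReal.ofReal (t ^ c)) t := by
      intro t ht
      have hset : Prod.mk t ⁻¹' ((MeasurableEquiv.piFinSuccAbove (fun _ : Fin (m+1) => ℝ) i).symm ⁻¹' B)
          = {y : Fin m → ℝ | η < t ^ (1 / w i) ∧
              ∀ k, y k ^ (1 / w (i.succAbove k)) < t ^ (1 / w i)} := by
        ext y
        simp only [Set.mem_preimage, hBdef, Set.mem_inter_iff, Set.mem_setOf_eq,
          MeasurableEquiv.piFinSuccAbove_symm_apply, Fin.insertNthEquiv_apply,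
          Fin.insertNth_apply_same]
        constructor
        · rintro ⟨h1, h2⟩
          refine ⟨h1, fun k => ?_⟩
          have := h2 (i.succAbove k) (Fin.succAbove_ne i k)
          rwa [Fin.insertNth_apply_succAbove] at this
        · rintro ⟨h1, h2⟩
          refine ⟨h1, fun j hj => ?_⟩
          obtain ⟨k, rfl⟩ := Fin.exists_succAbove_eq hj
          rw [Fin.insertNth_apply_succAbove]
          exact h2 k
      by_cases hcond : η < t ^ (1 / w i)
      · have ht' : η ^ w i < t := by
          rwa [one_div, Real.lt_rpow_inv_iff_of_pos hη0.le ht.1 (hw i)] at hcond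
        have ht0 : 0 < t := lt_trans ha0 ht'
        have hs0 : 0 < t ^ (1 / w i) := Real.rpow_pos_of_pos ht0 _
        have hs1 : t ^ (1 / w i) ≤ 1 := Real.rpow_le_one ht0.le ht.2 (one_div_pos.mpr (hw i)).le
        have hsetEq : {y : Fin m → ℝ | η < t ^ (1 / w i) ∧
            ∀ k, y k ^ (1 / w (i.succAbove k)) < t ^ (1 / w i)}
            = {y : Fin m → ℝ | ∀ k, y k ^ (1 / (w (i.succAbove k))) < t ^ (1 / w i)} := by
          ext y; simp only [Set.mem_setOf_eq, hcond, true_and]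
        rw [hset, hsetEq, L2 (fun k => w (i.succAbove k)) (fun k => hw _) hs0 hs1,
          Set.indicator_of_mem (Set.mem_Ioi.mpr ht')]
        congr 1
        have hsum : ∑ k, w (i.succAbove k) = W - w i := by
          have hs := Fin.sum_univ_succAbove w i
          rw [← hWdef] at hs
          linarith
        rw [hsum, ← Real.rpow_mul ht0.le, one_div, inv_mul_eq_div, ← hc]
      · have htle : t ∉ Set.Ioi (η ^ w i) := by
          intro hmem
          exact hcond (by
            rw [one_div, Real.lt_rpow_inv_iff_of_pos hη0.le ht.1 (hw i)]
            exact hmem)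
        have hempty : {y : Fin m → ℝ | η < t ^ (1 / w i) ∧
            ∀ k, y k ^ (1 / w (i.succAbove k)) < t ^ (1 / w i)} = ∅ :=
          Set.eq_empty_iff_forall_notMem.2 fun y hy => hcond hy.1
        rw [hset, hempty, measure_empty, Set.indicator_of_notMem htle]
    rw [lam_def] at hslice ⊢
    rw [setLIntegral_congr_fun measurableSet_Icc hslice,
      lintegral_indicator measurableSet_Ioi, Measure.restrict_restrict measurableSet_Ioi]
    have hIoc : Set.Ioi (η ^ w i) ∩ Set.Icc (0:ℝ) 1 = Set.Ioc (η ^ w i) 1 := by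
      ext u
      simp only [Set.mem_inter_iff, Set.mem_Ioi, Set.mem_Icc, Set.mem_Ioc]
      constructor
      · rintro ⟨h1, _, h3⟩; exact ⟨h1, h3⟩
      · rintro ⟨h1, h2⟩; exact ⟨h1, (le_of_lt (lt_of_le_of_lt ha0.le h1)), h2⟩
    rw [hIoc]
    have hinteg : IntegrableOn (fun t : ℝ => t ^ c) (Set.Ioc (η ^ w i) 1) volume :=
      (intervalIntegrable_rpow (Or.inl hc0)).1
    have hnn : 0 ≤ᵐ[volume.restrict (Set.Ioc (η ^ w i) 1)] fun t : ℝ => t ^ c := by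
      filter_upwards [self_mem_ae_restrict measurableSet_Ioc] with t ht
      exact Real.rpow_nonneg (le_of_lt (lt_trans ha0 ht.1)) c
    rw [← MeasureTheory.ofReal_integral_eq_lintegral_ofReal hinteg hnn]
    congr 1
    rw [← integral_of_le ha1.le,
      integral_rpow (Or.inl (by linarith : (-1:ℝ) < c))]
    have hc1 : c + 1 = W / w i := by
      rw [hc, eq_div_iff (hw i).ne', add_mul, div_mul_cancel₀ _ (hw i).ne']; ring
    have hpow : (η ^ w i) ^ (c + 1) = p := by
      rw [hc1, ← Real.rpow_mul hη0.le]
      rw [show w i * (W / w i) = W by rw [mul_comm, div_mul_cancel₀ _ (hw i).ne']]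
      exact hηW
    rw [hc1, Real.one_rpow, ← hc1, hpow, hc1]
    rw [div_div_eq_mul_div]
    field_simp
  rw [hpre2, ← Measure.map_apply hFmeas hBmeas, hjoint, hnum, hcompl,
    ENNReal.ofReal_mul (div_nonneg (hw i).le hW.le), mul_div_assoc,
    ENNReal.div_self (ENNReal.ofReal_pos.mpr (by linarith)).ne' ENNReal.ofReal_ne_top, mul_one]
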